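/- Let f : ℝ^d → ℝ be convex and differentiable and let B ⊆ ℝ^d be nonempty, compact and convex. Then for every ε > 0 there exists η > 0 such that for every θ ∈ B with f(θ) ≥ inf_{θ'∈B} f(θ') + ε and every v ∈ N_B(θ), one has ‖∇f(θ) + v‖₂² ≥ η. -/

import Mathlib

open scoped RealInnerProductSpace

lemma grad_ineq {E : Type*} [NormedAddCommGroup E] [InnerProductSpace ℝ E] [CompleteSpace E]
    {f : E → ℝ} (hf : ConvexOn ℝ Set.univ f) {g x : E}
    (hg : HasGradientAt f g x) (y : E) :
    f x + ⟪g, y - x⟫ ≤ f y := by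
  set φ : ℝ → ℝ := fun t => f (x + t • (y - x)) with hφ
  have hconv : ConvexOn ℝ Set.univ φ := by
    have := hf.comp_affineMap (AffineMap.lineMap x y : ℝ →ᵃ[ℝ] E)
    have heq : φ = f ∘ (AffineMap.lineMap x y : ℝ →ᵃ[ℝ] E) := by
      funext t
      simp [φ, AffineMap.lineMap_apply, Function.comp]
      rw [add_comm]
    rw [heq]
    simpa using this
  have hline : HasDerivAt (fun t : ℝ => x + t • (y - x)) (y - x) 0 := by
    simpa using ((hasDerivAt_id (0:ℝ)).smul_const (y - x)).const_add x
  have hderiv : HasDerivAt φ ⟪g, y - x⟫ 0 := by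
    have hfd : HasFDerivAt f ((InnerProductSpace.toDual ℝ E) g) (x + (0:ℝ) • (y - x)) := by
      simpa using hg.hasFDerivAt
    have := hfd.comp_hasDerivAt (0:ℝ) hline
    exact this
  have hslope := hconv.le_slope_of_hasDerivAt (Set.mem_univ (0:ℝ)) (Set.mem_univ (1:ℝ))
    one_pos hderiv
  have h01 : slope φ 0 1 = f y - f x := by
    simp [slope_def_field, φ]
  rw [h01] at hslope
  linarith
/-- Let `f : ℝ^d → ℝ` be convex and differentiable and let `B` be nonempty
compact convex.  Then for every `ε > 0` there exists `η > 0` such that for every `θ ∈ B` with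
`f(θ) ≥ inf_B f + ε` and every `v ∈ N_B(θ)`, one has `‖∇f(θ) + v‖₂² ≥ η`. -/
theorem stmt_18
    (d : ℕ)
    (f : EuclideanSpace ℝ (Fin d) → ℝ)
    (hf_conv : ConvexOn ℝ Set.univ f)
    (gradf : EuclideanSpace ℝ (Fin d) → EuclideanSpace ℝ (Fin d))
    (hf_grad : ∀ x, HasGradientAt f (gradf x) x)
    (B : Set (EuclideanSpace ℝ (Fin d)))
    (hB_ne : B.Nonempty) (hB_cpt : IsCompact B) (hB_conv : Convex ℝ B) :
    ∀ ε : ℝ, 0 < ε → ∃ η : ℝ, 0 < η ∧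
      ∀ θ ∈ B, sInf (f '' B) + ε ≤ f θ →
        ∀ v : EuclideanSpace ℝ (Fin d),
          (∀ x ∈ B, ⟪v, x - θ⟫ ≤ 0) → η ≤ ‖gradf θ + v‖ ^ 2 := by
  intro ε hε
  -- f is continuous, attains its min on B
  have hfc : Continuous f := by
    have : Differentiable ℝ f := fun x => (hf_grad x).hasFDerivAt.differentiableAt
    exact this.continuous
  obtain ⟨θs, hθs, hmin⟩ := hB_cpt.exists_isMinOn hB_ne hfc.continuousOn
  set M : ℝ := Metric.diam B + 1 with hM
  have hM0 : 0 < M := by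
    have := Metric.diam_nonneg (s := B)
    linarith
  refine ⟨(ε / M) ^ 2, by positivity, ?_⟩
  intro θ hθ hfθ v hv
  -- f θs ≤ sInf (f '' B), so f θ ≥ f θs + ε
  have hInf : f θs ≤ sInf (f '' B) := by
    apply le_csInf (hB_ne.image f)
    rintro _ ⟨x, hx, rfl⟩
    exact hmin hx
  have key : ⟪gradf θ + v, θs - θ⟫ ≤ -ε := by
    have h1 : f θ + ⟪gradf θ, θs - θ⟫ ≤ f θs := grad_ineq hf_conv (hf_grad θ) θs
    have h2 : ⟪v, θs - θ⟫ ≤ 0 := hv θs hθs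
    have := inner_add_left (𝕜 := ℝ) (gradf θ) v (θs - θ)
    rw [this]
    linarith
  have hdist : ‖θs - θ‖ ≤ M := by
    have := Metric.dist_le_diam_of_mem hB_cpt.isBounded hθs hθ
    rw [dist_eq_norm] at this
    linarith
  have hcs : ε ≤ ‖gradf θ + v‖ * ‖θs - θ‖ := by
    have := real_inner_le_norm (gradf θ + v) (-(θs - θ))
    rw [inner_neg_right, norm_neg] at this
    linarith
  have hnorm : ε / M ≤ ‖gradf θ + v‖ := by
    rw [div_le_iff₀ hM0]
    calc ε ≤ ‖gradf θ + v‖ * ‖θs - θ‖ := hcs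
      _ ≤ ‖gradf θ + v‖ * M := by
          exact mul_le_mul_of_nonneg_left hdist (norm_nonneg _)
  calc (ε / M) ^ 2 ≤ ‖gradf θ + v‖ ^ 2 := by
        apply pow_le_pow_left₀ (by positivity) hnorm
      _ = ‖gradf θ + v‖ ^ 2 := rfl
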